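/- arXiv:2209.10133 — 5 statements merged into one kernel-verified Lean document; each statement's English description precedes it below -/
import Mathlib

section
/- For p ∈ [0,1], let ρ_M = ((1+2p)/3)|ψ⁻⟩⟨ψ⁻| + ((1−p)/3)|00⟩⟨00| + ((1−p)/3)|ψ⁺⟩⟨ψ⁺| be the rank-3 maximally entangled mixed state, where |ψ^±⟩ = (|01⟩ ± |10⟩)/√2. Then Σ_{i,j=1}^{3} (Re Tr(ρ_M (σ_i ⊗ σ_j)))² = (1 + 4p + 22p²)/9, i.e., the steering observable of ρ_M equals √((1+4p+22p²)/9). -/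
open Matrix ComplexOrder

/-- The three Pauli matrices σ₁, σ₂, σ₃. -/
noncomputable def pauli : Fin 3 → Matrix (Fin 2) (Fin 2) ℂ
  | 0 => !![0, 1; 1, 0]
  | 1 => !![0, -Complex.I; Complex.I, 0]
  | 2 => !![1, 0; 0, -1]

/-- Kronecker product of two 2×2 matrices, as a 4×4 matrix
(two-qubit basis ordering |00⟩, |01⟩, |10⟩, |11⟩). -/
noncomputable def kron (A B : Matrix (Fin 2) (Fin 2) ℂ) : Matrix (Fin 4) (Fin 4) ℂ :=
  Matrix.of fun i j =>
    A ⟨i.val / 2, by have := i.isLt; omega⟩ ⟨j.val / 2, by have := j.isLt; omega⟩ *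
    B ⟨i.val % 2, by have := i.isLt; omega⟩ ⟨j.val % 2, by have := j.isLt; omega⟩

/-- The rank-one projector |v⟩⟨v| onto a two-qubit vector v. -/
noncomputable def outer (v : Fin 4 → ℂ) : Matrix (Fin 4) (Fin 4) ℂ :=
  Matrix.of fun i j => v i * star (v j)

/-- The Bell state |ψ⁻⟩ = (|01⟩ - |10⟩)/√2. -/
noncomputable def psiMinus : Fin 4 → ℂ := fun i => ![0, 1, -1, 0] i / (Real.sqrt 2 : ℂ)

/-- The Bell state |ψ⁺⟩ = (|01⟩ + |10⟩)/√2. -/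
noncomputable def psiPlus : Fin 4 → ℂ := fun i => ![0, 1, 1, 0] i / (Real.sqrt 2 : ℂ)

/-- The computational basis state |00⟩. -/
noncomputable def ket00 : Fin 4 → ℂ := ![1, 0, 0, 0]


lemma sqrt2_mul : ((Real.sqrt 2 : ℝ) : ℂ) * ((Real.sqrt 2 : ℝ) : ℂ) = 2 := by
  rw [← Complex.ofReal_mul, Real.mul_self_sqrt (by norm_num)]; norm_num

lemma outer_psiMinus : outer psiMinus = !![0,0,0,0; 0,1/2,-(1/2),0; 0,-(1/2),1/2,0; 0,0,0,0] := by
  ext i j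
  fin_cases i <;> fin_cases j <;>
    simp [outer, psiMinus, div_mul_div_comm, sqrt2_mul, Complex.ext_iff,
      Matrix.vecHead, Matrix.vecTail] <;> norm_num

lemma outer_psiPlus : outer psiPlus = !![0,0,0,0; 0,1/2,1/2,0; 0,1/2,1/2,0; 0,0,0,0] := by
  ext i j
  fin_cases i <;> fin_cases j <;>
    simp [outer, psiPlus, div_mul_div_comm, sqrt2_mul, Complex.ext_iff,
      Matrix.vecHead, Matrix.vecTail] <;> norm_num

lemma outer_ket00 : outer ket00 = !![1,0,0,0; 0,0,0,0; 0,0,0,0; 0,0,0,0] := by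
  ext i j
  fin_cases i <;> fin_cases j <;> simp [outer, ket00, Matrix.vecHead, Matrix.vecTail]

/-- For the rank-3 MEMS state
`ρ_M = ((1+2p)/3)|ψ⁻⟩⟨ψ⁻| + ((1−p)/3)|00⟩⟨00| + ((1−p)/3)|ψ⁺⟩⟨ψ⁺|` with p ∈ [0,1],
the squared steering observable `Σ_{i,j} (Re Tr(ρ_M (σᵢ ⊗ σⱼ)))²` equals
`(1 + 4p + 22p²)/9`. -/
theorem stmt2 (p : ℝ) (hp : p ∈ Set.Icc (0 : ℝ) 1)
    (ρM : Matrix (Fin 4) (Fin 4) ℂ)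
    (hρM : ρM = (((1 + 2 * p) / 3 : ℝ) : ℂ) • outer psiMinus +
        (((1 - p) / 3 : ℝ) : ℂ) • outer ket00 +
        (((1 - p) / 3 : ℝ) : ℂ) • outer psiPlus) :
    ∑ i, ∑ j, ((ρM * kron (pauli i) (pauli j)).trace).re ^ 2
      = (1 + 4 * p + 22 * p ^ 2) / 9 := by
  
  subst hρM
  rw [outer_psiMinus, outer_psiPlus, outer_ket00]
  simp only [Fin.sum_univ_three, trace, diag, mul_apply, Fin.sum_univ_four,
    pauli, kron, Matrix.of_apply, Matrix.add_apply, Matrix.smul_apply,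
    Matrix.cons_val', Matrix.cons_val_zero, Matrix.cons_val_one, Matrix.head_cons,
    Matrix.empty_val', Matrix.cons_val_fin_one, Matrix.head_fin_const,
    Matrix.cons_val_two, Matrix.cons_val_three, Matrix.tail_cons, smul_eq_mul]
  norm_num [Complex.ext_iff]
  ring
end

section
/- For every p ∈ [0,1), the strict inequality (1/2)(1 + √((1 + 4p + 22p²)/27)) < (2 + p)/3 holds. (Thus, for the rank-3 MEMS state with steering observable S = √((1+4p+22p²)/9) and concurrence C = p, the upper bound (1/2)(1 + S/√3) on the average teleportation fidelity based on the steering observable is strictly smaller than the bound (2 + C)/3 based on concurrence.) -/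
/-- For every p ∈ [0,1), the steering-based upper bound `(1/2)(1 + S/√3)` on the
average teleportation fidelity of the rank-3 MEMS state, with
`S = √((1+4p+22p²)/9)` (so `S/√3 = √((1+4p+22p²)/27)`), is strictly smaller than
the concurrence-based bound `(2 + C)/3` with `C = p`. -/
theorem stmt4 (p : ℝ) (hp : p ∈ Set.Ico (0 : ℝ) 1) :
    (1 / 2 : ℝ) * (1 + Real.sqrt ((1 + 4 * p + 22 * p ^ 2) / 27)) < (2 + p) / 3 := by
  obtain ⟨h0, h1⟩ := hp
  have key : Real.sqrt ((1 + 4 * p + 22 * p ^ 2) / 27) < (1 + 2 * p) / 3 := by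
    rw [show (1 + 2 * p) / 3 = Real.sqrt (((1 + 2 * p) / 3) ^ 2) from
      (Real.sqrt_sq (by linarith)).symm]
    apply Real.sqrt_lt_sqrt (by positivity)
    nlinarith [sq_nonneg p]
  linarith
end

section
/- For p ∈ [0,1], let ρ = ((1+p)/2)|ψ⁻⟩⟨ψ⁻| + ((1−p)/2)|00⟩⟨00| be the rank-2 maximally entangled mixed state, where |ψ⁻⟩ = (|01⟩ − |10⟩)/√2. Then Σ_{i,j=1}^{3} (Re Tr(ρ (σ_i ⊗ σ_j)))² = (1 + 2p + 3p²)/2, i.e., the steering observable of ρ equals √((1+2p+3p²)/2). -/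
open Matrix ComplexOrder

/-- For the rank-2 MEMS state `ρ = ((1+p)/2)|ψ⁻⟩⟨ψ⁻| + ((1−p)/2)|00⟩⟨00|` with
p ∈ [0,1], the squared steering observable `Σ_{i,j} (Re Tr(ρ (σᵢ ⊗ σⱼ)))²` equals
`(1 + 2p + 3p²)/2`. -/
theorem stmt5 (p : ℝ) (hp : p ∈ Set.Icc (0 : ℝ) 1)
    (ρ : Matrix (Fin 4) (Fin 4) ℂ)
    (hρ : ρ = (((1 + p) / 2 : ℝ) : ℂ) • outer psiMinus +
        (((1 - p) / 2 : ℝ) : ℂ) • outer ket00) :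
    ∑ i, ∑ j, ((ρ * kron (pauli i) (pauli j)).trace).re ^ 2
      = (1 + 2 * p + 3 * p ^ 2) / 2 := by
  subst hρ
  have h2 : (Real.sqrt 2 : ℂ) * (Real.sqrt 2 : ℂ) = 2 := by
    rw [← Complex.ofReal_mul, Real.mul_self_sqrt (by norm_num : (0:ℝ) ≤ 2)]
    norm_num
  have hne : (Real.sqrt 2 : ℂ) ≠ 0 := by
    intro h
    simp [h] at h2
  simp only [Fin.sum_univ_succ, Fin.sum_univ_zero, Matrix.trace, Matrix.diag,
    Matrix.mul_apply, pauli, kron, outer, psiMinus, ket00, Matrix.add_apply,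
    Matrix.smul_apply, Matrix.of_apply, smul_eq_mul, Matrix.cons_val_succ, Matrix.cons_val_zero, Matrix.cons_val_one, Matrix.head_cons]
  norm_num [Fin.sum_univ_succ, Complex.add_re, Complex.mul_re, Complex.ofReal_re,
    Complex.ofReal_im, Complex.div_re, Complex.div_im, Complex.I_re, Complex.I_im,
    Complex.normSq]
  set_option maxRecDepth 100000 in ring_nf
  have h2r : Real.sqrt 2 ^ 2 = 2 := Real.sq_sqrt (by norm_num)
  rw [show (Real.sqrt 2)^4 = (Real.sqrt 2 ^ 2)^2 by ring, h2r]
  ring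
end

section
/- For every p ∈ [0,1), the strict inequality (1/2)(1 + √((1 + 2p + 3p²)/6)) < (5 + p)/6 holds. (Thus, for the rank-2 MEMS state with steering observable S = √((1+2p+3p²)/2) and concurrence C = (1+p)/2, the upper bound (1/2)(1 + S/√3) on the average teleportation fidelity based on the steering observable is strictly smaller than the bound (2 + C)/3 based on concurrence.) -/
/-- For every p ∈ [0,1), the steering-based upper bound `(1/2)(1 + S/√3)` on the
average teleportation fidelity of the rank-2 MEMS state, with
`S = √((1+2p+3p²)/2)` (so `S/√3 = √((1+2p+3p²)/6)`), is strictly smaller than the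
concurrence-based bound `(2 + C)/3` with `C = (1+p)/2`, i.e., `(5+p)/6`. -/
theorem stmt7 (p : ℝ) (hp : p ∈ Set.Ico (0 : ℝ) 1) :
    (1 / 2 : ℝ) * (1 + Real.sqrt ((1 + 2 * p + 3 * p ^ 2) / 6)) < (5 + p) / 6 := by
  obtain ⟨h0, h1⟩ := hp
  have h : Real.sqrt ((1 + 2 * p + 3 * p ^ 2) / 6) < (2 + p) / 3 := by
    rw [Real.sqrt_lt' (by linarith)]
    nlinarith
  linarith
end

section
/- Let a, b, c, d be nonnegative reals with a + b + c + d = 1 and let w, z be complex numbers with |w|² ≤ ad and |z|² ≤ bc (the constraints of a two-qubit X-type density matrix ρ_X). If 4(|w|² + |z|²) + (a + d − b − c)² > 1 (i.e., the steering observable S(ρ_X) > 1), then χ₀ = (a + d + 2|w|)/2 > 1/2 or χ₁ = (b + c + 2|z|)/2 > 1/2; consequently the fully entangled fraction F(ρ_X) = max{χ₀, χ₁, χ₂, χ₃} exceeds 1/2 and the restricted average teleportation fidelity f(ρ_X) = (2F(ρ_X) + 1)/3 exceeds 2/3. In other words, X-type states violating the three-setting linear steering inequality are useful for teleportation even when the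 receiver can only apply identity or Pauli rotation operations. -/
lemma key (a b c d W Z : ℝ) (ha : 0 ≤ a) (hb : 0 ≤ b) (hc : 0 ≤ c) (hd : 0 ≤ d)
    (hW : 0 ≤ W) (hZ : 0 ≤ Z)
    (hsum : a + b + c + d = 1)
    (hw : W ^ 2 ≤ a * d) (hz : Z ^ 2 ≤ b * c)
    (hS : 4 * (W ^ 2 + Z ^ 2) + (a + d - b - c) ^ 2 > 1) :
    (a + d + 2 * W) / 2 > 1 / 2 ∨ (b + c + 2 * Z) / 2 > 1 / 2 := by
  by_contra h
  push_neg at h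
  obtain ⟨h1, h2⟩ := h
  -- 2W ≤ b+c, 2Z ≤ a+d, 4W² ≤ (a+d)², 4Z² ≤ (b+c)²
  have hW1 : 2 * W ≤ b + c := by linarith
  have hZ1 : 2 * Z ≤ a + d := by linarith
  have hW2 : 2 * W ≤ a + d := by nlinarith [sq_nonneg (a - d)]
  have hZ2 : 2 * Z ≤ b + c := by nlinarith [sq_nonneg (b - c)]
  have h3 : 4 * W ^ 2 ≤ (a + d) * (b + c) := by nlinarith
  have h4 : 4 * Z ^ 2 ≤ (a + d) * (b + c) := by nlinarith
  nlinarith [mul_nonneg (add_nonneg ha hd) (add_nonneg hb hc)]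

/-- For an X-type two-qubit state with diagonal entries a, b, c, d ≥ 0,
a + b + c + d = 1, and anti-diagonal entries w, z ∈ ℂ with |w|² ≤ ad, |z|² ≤ bc:
if the steering observable exceeds 1, i.e. `4(|w|² + |z|²) + (a+d−b−c)² > 1`
(violation of the three-setting linear steering inequality), then
`χ₀ = (a+d+2|w|)/2 > 1/2` or `χ₁ = (b+c+2|z|)/2 > 1/2`; consequently the fully
entangled fraction `F = max{χ₀, χ₁, χ₂, χ₃}` exceeds 1/2 and the restricted
average teleportation fidelity `f = (2F+1)/3` exceeds 2/3. -/
theorem stmt8 (a b c d : ℝ) (ha : 0 ≤ a) (hb : 0 ≤ b) (hc : 0 ≤ c) (hd : 0 ≤ d)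
    (hsum : a + b + c + d = 1) (w z : ℂ)
    (hw : ‖w‖ ^ 2 ≤ a * d) (hz : ‖z‖ ^ 2 ≤ b * c)
    (hS : 4 * (‖w‖ ^ 2 + ‖z‖ ^ 2) + (a + d - b - c) ^ 2 > 1) :
    ((a + d + 2 * ‖w‖) / 2 > 1 / 2 ∨ (b + c + 2 * ‖z‖) / 2 > 1 / 2) ∧
    max (max ((a + d + 2 * ‖w‖) / 2) ((b + c + 2 * ‖z‖) / 2))
        (max ((a + d - 2 * ‖w‖) / 2) ((b + c - 2 * ‖z‖) / 2)) > 1 / 2 ∧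
    (2 * max (max ((a + d + 2 * ‖w‖) / 2) ((b + c + 2 * ‖z‖) / 2))
        (max ((a + d - 2 * ‖w‖) / 2) ((b + c - 2 * ‖z‖) / 2)) + 1) / 3
      > 2 / 3 := by
  have hmain := key a b c d (‖w‖) (‖z‖) ha hb hc hd
    (norm_nonneg w) (norm_nonneg z) hsum hw hz hS
  refine ⟨hmain, ?_, ?_⟩ <;>
  · rcases hmain with h | h
    · have := le_max_left ((a + d + 2 * ‖w‖) / 2) ((b + c + 2 * ‖z‖) / 2)
      have := le_max_left
        (max ((a + d + 2 * ‖w‖) / 2) ((b + c + 2 * ‖z‖) / 2))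
        (max ((a + d - 2 * ‖w‖) / 2) ((b + c - 2 * ‖z‖) / 2))
      linarith
    · have := le_max_right ((a + d + 2 * ‖w‖) / 2) ((b + c + 2 * ‖z‖) / 2)
      have := le_max_left
        (max ((a + d + 2 * ‖w‖) / 2) ((b + c + 2 * ‖z‖) / 2))
        (max ((a + d - 2 * ‖w‖) / 2) ((b + c - 2 * ‖z‖) / 2))
      linarith
end
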